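/- Partial-space search refines state-space transitions: let ⟨s,⊥⟩ = n₀, n₁, …, n_ℓ = ⟨s',⊥⟩ be a sequence of partial-space search nodes in which each node is a successor of the previous one, ℓ ≥ 1, and no intermediate node n₁,…,n_{ℓ−1} has partial action ⊥. Then there is exactly one index i with n_i = ⟨s,a⟩ for a fully instantiated partial action (ground action) a; this a is applicable in s, s' = succ(s,a), all intermediate nodes have state s, and ℓ = k + 2 where k is the number of parameters of the schema of a. -/

import Mathlib

namespace PS

/-- A lifted planning task: atoms, action schemas with arities, objects,
preconditions/add/delete effects of ground instantiations, initial state and goal. -/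
structure LiftedTask where
  Atom : Type
  Schema : Type
  Obj : Type
  arity : Schema → ℕ
  pre : Schema → List Obj → Set Atom
  add : Schema → List Obj → Set Atom
  del : Schema → List Obj → Set Atom
  init : Set Atom
  goal : Set Atom

/-- A ground action: a schema with a full list of instantiating objects. -/
abbrev GroundAction (T : LiftedTask) :=
  { p : T.Schema × List T.Obj // p.2.length = T.arity p.1 }

/-- A partial action: `none` is ⊥; otherwise a schema with a prefix of instantiating objects. -/
abbrev PartialAction (T : LiftedTask) :=
  Option { p : T.Schema × List T.Obj // p.2.length ≤ T.arity p.1 }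

/-- `a` is applicable in state `s` iff `pre(a) ⊆ s`. -/
def Applicable (T : LiftedTask) (a : GroundAction T) (s : Set T.Atom) : Prop :=
  T.pre a.val.1 a.val.2 ⊆ s

/-- `succ(s,a) = (s \ del(a)) ∪ add(a)`. -/
def applySucc (T : LiftedTask) (s : Set T.Atom) (a : GroundAction T) : Set T.Atom :=
  (s \ T.del a.val.1 a.val.2) ∪ T.add a.val.1 a.val.2

/-- A ground action viewed as a (fully instantiated) partial action. -/
def toPartial (T : LiftedTask) (a : GroundAction T) : PartialAction T :=
  some ⟨a.val, le_of_eq a.prop⟩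

/-- A partial action is fully instantiated iff all schema parameters are instantiated. -/
def isFull (T : LiftedTask) : PartialAction T → Prop
  | none => False
  | some p => p.val.2.length = T.arity p.val.1

/-- `𝒜^ρ`: the set of ground actions in the subtree rooted at `ρ` of the partial action tree. -/
def subtree (T : LiftedTask) : PartialAction T → Set (GroundAction T)
  | none => Set.univ
  | some p => {a : GroundAction T | a.val.1 = p.val.1 ∧ p.val.2 <+: a.val.2}

/-- `ρ` is applicable in `s` iff `𝒜^ρ_s = 𝒜^ρ ∩ 𝒜_s ≠ ∅`. -/
def ApplicableP (T : LiftedTask) (ρ : PartialAction T) (s : Set T.Atom) : Prop :=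
  ∃ a ∈ subtree T ρ, Applicable T a s

/-- The child relation of the partial action tree. -/
def Child (T : LiftedTask) : PartialAction T → PartialAction T → Prop
  | none, some p' => p'.val.2 = []
  | some p, some p' => p.val.1 = p'.val.1 ∧ ∃ o : T.Obj, p'.val.2 = p.val.2 ++ [o]
  | _, none => False

/-- A partial-space search node: a state and a partial action. -/
abbrev Node (T : LiftedTask) := Set T.Atom × PartialAction T

/-- The successor relation of partial-space search. -/
inductive Succ (T : LiftedTask) : Node T → Node T → Prop
  | refine {s : Set T.Atom} {ρ ρ' : PartialAction T} :
      Child T ρ ρ' → ApplicableP T ρ' s → Succ T (s, ρ) (s, ρ')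
  | finish {s : Set T.Atom} (a : GroundAction T) :
      Succ T (s, toPartial T a) (applySucc T s a, (none : PartialAction T))

/-- `IsPlanFrom T s π`: `π` is a valid plan starting from state `s`. -/
inductive IsPlanFrom (T : LiftedTask) : Set T.Atom → List (GroundAction T) → Prop
  | nil {s : Set T.Atom} : T.goal ⊆ s → IsPlanFrom T s []
  | cons {s : Set T.Atom} {a : GroundAction T} {l : List (GroundAction T)} :
      Applicable T a s → IsPlanFrom T (applySucc T s a) l → IsPlanFrom T s (a :: l)

/-- The ground action corresponding to a fully instantiated partial action, if any. -/
def groundOf? (T : LiftedTask) : PartialAction T → Option (GroundAction T)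
  | none => none
  | some p => if h : p.val.2.length = T.arity p.val.1 then some ⟨p.val, h⟩ else none

/-- The ordered subsequence of fully instantiated partial actions in a node sequence. -/
def extractPlan (T : LiftedTask) (l : List (Node T)) : List (GroundAction T) :=
  l.filterMap fun n => groundOf? T n.2

/-- The partial action instantiating the first `j` parameters of the ground action `a`. -/
def prefixPA (T : LiftedTask) (a : GroundAction T) (j : ℕ) : PartialAction T :=
  some ⟨(a.val.1, a.val.2.take j), by
    rw [List.length_take]
    exact (min_le_right _ _).trans a.prop.le⟩

/-- The parent map of the partial action tree (sends ⊥ to ⊥). -/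
def parentPA (T : LiftedTask) : PartialAction T → PartialAction T
  | none => none
  | some p =>
      if p.val.2.isEmpty then none
      else some ⟨(p.val.1, p.val.2.dropLast), by
        rw [List.length_dropLast]
        exact (Nat.sub_le _ _).trans p.prop⟩

/-- Specificity: `0` for ⊥, `j+1` for a partial action with `j` instantiated parameters. -/
def spec (T : LiftedTask) : PartialAction T → ℕ
  | none => 0
  | some p => p.val.2.length + 1

/-- The canonical root-to-goal path obtained by decomposing each plan action into its
chain of partial actions of increasing specificity. -/
def planPath (T : LiftedTask) : Set T.Atom → List (GroundAction T) → List (Node T)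
  | s, [] => [(s, (none : PartialAction T))]
  | s, a :: π =>
      ((s, (none : PartialAction T)) ::
        (List.range (T.arity a.val.1 + 1)).map fun j => (s, prefixPA T a j)) ++
        planPath T (applySucc T s a) π

/-- `ρ` lies on the unique chain from ⊥ to the ground action `a` in the partial action tree. -/
def OnChain (T : LiftedTask) (ρ : PartialAction T) (a : GroundAction T) : Prop :=
  ρ = none ∨ ∃ j ≤ T.arity a.val.1, ρ = prefixPA T a j


section Aux

variable (T : LiftedTask)

lemma child_not_none (ρ : PartialAction T) : ¬ Child T ρ none := by
  cases ρ <;> exact fun h => h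

lemma child_spec {ρ ρ' : PartialAction T} (h : Child T ρ ρ') :
    spec T ρ' = spec T ρ + 1 := by
  cases ρ <;> cases ρ'
  · exact h.elim
  case none.some p' =>
    have h' : p'.val.2 = [] := h
    simp [spec, h']
  · exact h.elim
  case some.some p p' =>
    obtain ⟨_, o, ho⟩ := h
    simp [spec, ho]

lemma succ_elim_refine {n n' : Node T} (h : Succ T n n') (hne : n'.2 ≠ none) :
    n'.1 = n.1 ∧ Child T n.2 n'.2 ∧ ApplicableP T n'.2 n'.1 := by
  cases h with
  | refine hc ha => exact ⟨rfl, hc, ha⟩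
  | finish a => exact absurd rfl hne

lemma succ_elim_finish {n n' : Node T} (h : Succ T n n') (hnone : n'.2 = none) :
    ∃ a : GroundAction T, n.2 = toPartial T a ∧ n'.1 = applySucc T n.1 a := by
  cases h with
  | @refine s ρ ρ' hc ha =>
    replace hnone : ρ' = none := hnone
    subst hnone
    exact (child_not_none T ρ hc).elim
  | finish a => exact ⟨a, rfl, rfl⟩

lemma applicableP_full {a : GroundAction T} {s : Set T.Atom}
    (h : ApplicableP T (toPartial T a) s) : Applicable T a s := by
  obtain ⟨b, hb, hap⟩ := h
  obtain ⟨h1, h2⟩ := hb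
  have hlen : a.val.2.length = b.val.2.length := by
    rw [a.prop, b.prop, h1]
  have hval : b.val = a.val := Prod.ext_iff.mpr ⟨h1, (h2.eq_of_length hlen).symm⟩
  rwa [show b = a from Subtype.ext hval] at hap

end Aux

/-- **Partial-space search refines state-space transitions**: along a successor sequence
from `⟨s,⊥⟩` to `⟨s',⊥⟩` with no intermediate ⊥ node, there is exactly one fully
instantiated node, it equals `⟨s,a⟩` for a ground action `a` applicable in `s`,
`s' = succ(s,a)`, all intermediate nodes carry state `s`, and `ℓ = k + 2` where `k` is the
number of parameters of the schema of `a`. -/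
theorem refines_state_transition (T : LiftedTask) (ns : ℕ → Node T) (ℓ : ℕ)
    (s s' : Set T.Atom) (hℓ : 1 ≤ ℓ)
    (hchain : ∀ i < ℓ, Succ T (ns i) (ns (i + 1)))
    (h0 : ns 0 = (s, (none : PartialAction T)))
    (hl : ns ℓ = (s', (none : PartialAction T)))
    (hmid : ∀ i, 0 < i → i < ℓ → (ns i).2 ≠ none) :
    ∃ a : GroundAction T,
      (∃! i : ℕ, i ≤ ℓ ∧ isFull T (ns i).2) ∧
      (∀ i ≤ ℓ, isFull T (ns i).2 → ns i = (s, toPartial T a)) ∧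
      Applicable T a s ∧
      s' = applySucc T s a ∧
      (∀ i < ℓ, (ns i).1 = s) ∧
      ℓ = T.arity a.val.1 + 2 := by
  -- The last step must be a `finish` step producing the ground action `a`.
  have hlast := hchain (ℓ - 1) (by omega)
  have hidx : ℓ - 1 + 1 = ℓ := by omega
  rw [hidx] at hlast
  have hlnone : (ns ℓ).2 = none := by rw [hl]
  obtain ⟨a, hpa, hsucc⟩ := succ_elim_finish T hlast hlnone
  -- ℓ ≥ 2
  have hℓ2 : 2 ≤ ℓ := by
    by_contra h
    have h1 : ℓ = 1 := by omega
    rw [h1] at hpa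
    simp only [h0] at hpa
    exact Option.some_ne_none _ hpa.symm
  -- All nodes before index ℓ carry state s, and specificity equals the index.
  have hstate : ∀ i ≤ ℓ - 1, (ns i).1 = s ∧ spec T (ns i).2 = i := by
    intro i
    induction i with
    | zero => intro _; rw [h0]; exact ⟨rfl, rfl⟩
    | succ i ih =>
      intro hi
      obtain ⟨hs, hsp⟩ := ih (by omega)
      have hstep := hchain i (by omega)
      have hne : (ns (i + 1)).2 ≠ none := hmid (i + 1) (by omega) (by omega)
      obtain ⟨h1, h2, _⟩ := succ_elim_refine T hstep hne
      refine ⟨h1.trans hs, ?_⟩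
      rw [child_spec T h2, hsp]
  have hs1 : (ns (ℓ - 1)).1 = s := (hstate (ℓ - 1) le_rfl).1
  -- specificity at ℓ - 1
  have hspecl : spec T (ns (ℓ - 1)).2 = ℓ - 1 := (hstate (ℓ - 1) le_rfl).2
  have hspecfull : spec T (ns (ℓ - 1)).2 = T.arity a.val.1 + 2 - 1 := by
    rw [hpa]
    show a.val.2.length + 1 = T.arity a.val.1 + 2 - 1
    rw [a.prop]
    omega
  have hℓeq : ℓ = T.arity a.val.1 + 2 := by omega
  -- schema along the chain equals the schema of a
  have hschema : ∀ j, ∀ i, i + j = ℓ - 1 → 1 ≤ i →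
      ∃ p, (ns i).2 = some p ∧ p.val.1 = a.val.1 := by
    intro j
    induction j with
    | zero =>
      intro i hij _
      have hie : i = ℓ - 1 := by omega
      subst hie
      exact ⟨⟨a.val, le_of_eq a.prop⟩, hpa, rfl⟩
    | succ j ih =>
      intro i hij hi1
      obtain ⟨p', hp', hps'⟩ := ih (i + 1) (by omega) (by omega)
      have hstep := hchain i (by omega)
      have hne : (ns (i + 1)).2 ≠ none := by rw [hp']; exact Option.some_ne_none _
      obtain ⟨_, hc, _⟩ := succ_elim_refine T hstep hne
      rw [hp'] at hc
      have hne2 : (ns i).2 ≠ none := hmid i (by omega) (by omega)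
      obtain ⟨p, hp⟩ := Option.ne_none_iff_exists'.mp hne2
      rw [hp] at hc
      exact ⟨p, hp, hc.1.trans hps'⟩
  -- full nodes occur only at index ℓ - 1
  have hfull : ∀ i ≤ ℓ, isFull T (ns i).2 → i = ℓ - 1 := by
    intro i hi hf
    rcases Nat.eq_zero_or_pos i with h0i | h0i
    · subst h0i; rw [h0] at hf; exact hf.elim
    rcases eq_or_lt_of_le hi with hieq | hilt
    · subst hieq; rw [hl] at hf; exact hf.elim
    obtain ⟨p, hp, hps⟩ := hschema (ℓ - 1 - i) i (by omega) (by omega)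
    have hsp := (hstate i (by omega)).2
    rw [hp] at hsp hf
    have hlenp : p.val.2.length + 1 = i := hsp
    have hfl : p.val.2.length = T.arity p.val.1 := hf
    rw [hps] at hfl
    omega
  -- node at ℓ - 1
  have hnode : ns (ℓ - 1) = (s, toPartial T a) := by
    rw [← hs1, ← hpa]
  have hfull_l : isFull T (ns (ℓ - 1)).2 := by
    rw [hpa]; exact a.prop
  -- applicability
  have happ : Applicable T a s := by
    have hstep := hchain (ℓ - 2) (by omega)
    have hidx2 : ℓ - 2 + 1 = ℓ - 1 := by omega
    rw [hidx2] at hstep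
    have hne : (ns (ℓ - 1)).2 ≠ none := by rw [hpa]; exact Option.some_ne_none _
    obtain ⟨_, _, hap⟩ := succ_elim_refine T hstep hne
    rw [hpa, hs1] at hap
    exact applicableP_full T hap
  refine ⟨a, ⟨ℓ - 1, ⟨by omega, hfull_l⟩, fun y hy => hfull y hy.1 hy.2⟩, ?_, happ, ?_, ?_, hℓeq⟩
  · intro i hi hf
    rw [hfull i hi hf]
    exact hnode
  · rw [← hs1, ← hsucc, hl]
  · intro i hi
    exact (hstate i (by omega)).1

end PS
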